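/- The dual diamond norm of a cq-map satisfies ‖φ_A^{cq}‖^⋄ = inf_{σ ∈ S(H)} max_i ‖σ^{-1/2} A_i σ^{-1/2}‖, where the infimum is over faithful states σ whose support contains the supports of all A_i. -/

import Mathlib

open scoped Matrix Kronecker ComplexOrder Matrix.Norms.L2Operator

noncomputable section

/-- The square root of a positive semidefinite matrix, as `Matrix.PosSemidef.sqrt` was
defined in the older Mathlib (removed since). -/
def Matrix.PosSemidef.sqrt {n : Type} [Fintype n] [DecidableEq n] {A : Matrix n n ℂ}
    (hA : A.PosSemidef) : Matrix n n ℂ :=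
  hA.1.eigenvectorUnitary.1 * Matrix.diagonal ((↑) ∘ Real.sqrt ∘ hA.1.eigenvalues) *
    (star hA.1.eigenvectorUnitary : Matrix n n ℂ)

/-- Square complex matrices indexed by `ι`. -/
abbrev Mat (ι : Type) [Fintype ι] [DecidableEq ι] : Type := Matrix ι ι ℂ

/-- Linear maps between matrix algebras. -/
abbrev MatMap (ι κ : Type) [Fintype ι] [DecidableEq ι] [Fintype κ] [DecidableEq κ] : Type :=
  Mat ι →ₗ[ℂ] Mat κ

variable {ι κ μ ν : Type} [Fintype ι] [DecidableEq ι] [Fintype κ] [DecidableEq κ]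
  [Fintype μ] [DecidableEq μ] [Fintype ν] [DecidableEq ν]

/-- `φ ⊗ id_τ`, the amplification of `φ` with the identity on `Mat τ`. -/
def tensorId (φ : MatMap ι κ) (τ : Type) [Fintype τ] [DecidableEq τ] :
    Matrix (ι × τ) (ι × τ) ℂ →ₗ[ℂ] Matrix (κ × τ) (κ × τ) ℂ where
  toFun X := Matrix.of fun p q => φ (Matrix.of fun i j => X (i, p.2) (j, q.2)) p.1 q.1
  map_add' X Y := by
    funext p q
    show φ (Matrix.of fun i j => (X + Y) (i, p.2) (j, q.2)) p.1 q.1 = _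
    rw [show (Matrix.of fun i j => (X + Y) (i, p.2) (j, q.2))
        = (Matrix.of fun i j => X (i, p.2) (j, q.2))
          + (Matrix.of fun i j => Y (i, p.2) (j, q.2)) from rfl, map_add]
    rfl
  map_smul' c X := by
    funext p q
    show φ (Matrix.of fun i j => (c • X) (i, p.2) (j, q.2)) p.1 q.1 = _
    rw [show (Matrix.of fun i j => (c • X) (i, p.2) (j, q.2))
        = c • (Matrix.of fun i j => X (i, p.2) (j, q.2)) from rfl, map_smul]
    rfl

/-- `φ` is Hermitian-preserving. -/
def IsHermitianPreserving (φ : MatMap ι κ) : Prop := ∀ X, (φ X)ᴴ = φ Xᴴ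

/-- `φ` is completely positive: all amplifications by finite-dimensional identities
preserve positive semidefiniteness. -/
def IsCP (φ : MatMap ι κ) : Prop :=
  ∀ (l : ℕ) (X : Matrix (ι × Fin l) (ι × Fin l) ℂ), X.PosSemidef →
    (tensorId φ (Fin l) X).PosSemidef

/-- `φ` is trace-preserving. -/
def IsTP (φ : MatMap ι κ) : Prop := ∀ X, (φ X).trace = X.trace

/-- A channel is a completely positive trace-preserving map. -/
def IsChannel (φ : MatMap ι κ) : Prop := IsCP φ ∧ IsTP φ

/-- Density operator. -/
def IsState (σ : Mat ι) : Prop := σ.PosSemidef ∧ σ.trace = 1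

/-- The Choi matrix of `φ`. -/
def choiMatrix (φ : MatMap ι κ) : Matrix (κ × ι) (κ × ι) ℂ :=
  Matrix.of fun p q => φ (Matrix.single p.2 q.2 1) p.1 q.1

/-- The tracelike functional `s`. -/
def sFun (φ : MatMap ι ι) : ℂ :=
  ∑ i, ∑ j, φ (Matrix.single i j 1) i j

/-- The pairing `⟨ψ, φ⟩ = s(ψ ∘ φ)`. -/
def pairing (ψ : MatMap κ ι) (φ : MatMap ι κ) : ℂ := sFun (ψ ∘ₗ φ)

/-- The erasure map `A ↦ Tr[A] σ`. -/
def erasure (σ : Mat κ) : MatMap ι κ :=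
  (Matrix.traceLinearMap ι ℂ ℂ).smulRight σ

/-- The diamond norm, via its order-theoretic characterization. -/
noncomputable def diamondNorm (φ : MatMap ι κ) : ℝ :=
  sInf {r : ℝ | 0 < r ∧ ∃ α : MatMap ι κ, IsChannel α ∧
    IsCP ((r : ℂ) • α - φ) ∧ IsCP ((r : ℂ) • α + φ)}

/-- The dual diamond norm, via its order-theoretic characterization. -/
noncomputable def dualDiamondNorm (ψ : MatMap ι κ) : ℝ :=
  sInf {r : ℝ | 0 < r ∧ ∃ σ : Mat κ, IsState σ ∧
    IsCP ((r : ℂ) • erasure (ι := ι) σ - ψ) ∧ IsCP ((r : ℂ) • erasure (ι := ι) σ + ψ)}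

/-- The Hilbert–Schmidt (trace-duality) adjoint of `ψ`. -/
def adjointMap (ψ : MatMap ι κ) : MatMap κ ι where
  toFun A := Matrix.of fun i j => (A * ψ (Matrix.single j i 1)).trace
  map_add' A B := by funext i j; simp [Matrix.add_mul]
  map_smul' c A := by funext i j; simp [Matrix.smul_mul]

/-- The cq-map associated with a family of operators. -/
def cqMap {n : ℕ} (A : Fin n → Mat ι) : MatMap (Fin n) ι where
  toFun X := ∑ i, X i i • A i
  map_add' X Y := by simp [Matrix.add_apply, add_smul, Finset.sum_add_distrib]
  map_smul' c X := by simp [Matrix.smul_apply, smul_smul, Finset.smul_sum]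

/-- The qc-map associated with a family of operators. -/
def qcMap {n : ℕ} (B : Fin n → Mat ι) : MatMap ι (Fin n) where
  toFun X := Matrix.diagonal fun i => (X * B i).trace
  map_add' X Y := by
    funext i j
    by_cases h : i = j <;>
      simp [Matrix.add_mul, Matrix.diagonal, Matrix.of_apply, h]
  map_smul' c X := by
    funext i j
    by_cases h : i = j <;>
      simp [Matrix.smul_mul, Matrix.diagonal, Matrix.of_apply, h]

/-- A POVM with `n` outcomes. -/
def IsPOVM {n : ℕ} (M : Fin n → Mat ι) : Prop :=
  (∀ i, (M i).PosSemidef) ∧ ∑ i, M i = 1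

/-- An ensemble: probabilities with states. -/
def IsEnsemble {n : ℕ} (lam : Fin n → ℝ) (σ : Fin n → Mat ι) : Prop :=
  (∀ i, 0 < lam i) ∧ (∑ i, lam i = 1) ∧ ∀ i, IsState (σ i)

/-- Optimal success probability of guessing among the states of an ensemble. -/
noncomputable def pSucc {n : ℕ} (lam : Fin n → ℝ) (σ : Fin n → Mat ι) : ℝ :=
  sSup {r : ℝ | ∃ M : Fin n → Mat ι, IsPOVM M ∧
    r = ∑ i, lam i * ((M i * σ i).trace).re}

/-- Trace norm `‖A‖₁ = Tr √(AᴴA)`. -/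
noncomputable def traceNorm (A : Mat ι) : ℝ :=
  ((Matrix.posSemidef_conjTranspose_mul_self A).sqrt).trace.re

/-- Le Cam deficiency of `Φ` with respect to `Ψ`. -/
noncomputable def deficiency (Φ : MatMap ι κ) (Ψ : MatMap ι μ) : ℝ :=
  sInf {r : ℝ | ∃ α : MatMap μ κ, IsChannel α ∧ r = diamondNorm (Φ - α ∘ₗ Ψ)}


lemma Matrix.IsHermitian.star_mul_self_mul_eq_diagonal {M : Matrix ι ι ℂ} (hM : M.IsHermitian) :
    star (hM.eigenvectorUnitary : Matrix ι ι ℂ) * M * (hM.eigenvectorUnitary : Matrix ι ι ℂ)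
      = Matrix.diagonal (RCLike.ofReal ∘ hM.eigenvalues) := by
  have h := hM.conjStarAlgAut_star_eigenvectorUnitary
  simp only [Unitary.conjStarAlgAut_star_apply, Unitary.coe_star] at h
  exact h

lemma Matrix.PosSemidef.posSemidef_sqrt {A : Matrix ι ι ℂ} (hA : A.PosSemidef) :
    hA.sqrt.PosSemidef := by
  have hd : (Matrix.diagonal ((↑) ∘ Real.sqrt ∘ hA.1.eigenvalues) : Matrix ι ι ℂ).PosSemidef :=
    Matrix.posSemidef_diagonal_iff.mpr fun i => Complex.zero_le_real.mpr (Real.sqrt_nonneg _)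
  exact hd.mul_mul_conjTranspose_same (hA.1.eigenvectorUnitary : Matrix ι ι ℂ)

lemma Matrix.PosSemidef.sqrt_mul_self {A : Matrix ι ι ℂ} (hA : A.PosSemidef) :
    hA.sqrt * hA.sqrt = A := by
  set U : Matrix ι ι ℂ := ↑hA.1.eigenvectorUnitary with hUdef
  set D : Matrix ι ι ℂ := Matrix.diagonal ((↑) ∘ Real.sqrt ∘ hA.1.eigenvalues) with hDdef
  have hU : star U * U = 1 := Matrix.mem_unitaryGroup_iff'.mp (hA.1.eigenvectorUnitary).2
  have hU' : U * star U = 1 := Matrix.mem_unitaryGroup_iff.mp (hA.1.eigenvectorUnitary).2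
  have hd : D * D = Matrix.diagonal (RCLike.ofReal ∘ hA.1.eigenvalues) := by
    rw [hDdef, Matrix.diagonal_mul_diagonal]
    congr 1
    funext i
    simp only [Function.comp_apply]
    rw [← Complex.ofReal_mul, Real.mul_self_sqrt (hA.eigenvalues_nonneg i)]
    rfl
  have hdiag := hA.1.star_mul_self_mul_eq_diagonal
  rw [← hUdef] at hdiag
  calc hA.sqrt * hA.sqrt = U * D * (star U * U) * D * star U := by
        simp only [Matrix.PosSemidef.sqrt, hUdef, hDdef]; noncomm_ring
    _ = U * (star U * A * U) * star U := by rw [hU, mul_one, mul_assoc U D D, hd, hdiag]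
    _ = (U * star U) * A * (U * star U) := by noncomm_ring
    _ = A := by rw [hU', one_mul, mul_one]

theorem Matrix.posSemidef_iff_eq_transpose_mul_self {A : Matrix ι ι ℂ} :
    A.PosSemidef ↔ ∃ B : Matrix ι ι ℂ, A = Bᴴ * B := by
  constructor
  · intro hA
    exact ⟨hA.sqrt, by rw [hA.posSemidef_sqrt.1.eq, hA.sqrt_mul_self]⟩
  · rintro ⟨B, rfl⟩
    exact Matrix.posSemidef_conjTranspose_mul_self B

namespace DDN

variable {ι : Type} [Fintype ι] [DecidableEq ι]


variable {ι : Type} [Fintype ι] [DecidableEq ι]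

lemma psd_sum {α : Type*} (s : Finset α) (f : α → Matrix ι ι ℂ)
    (h : ∀ a ∈ s, (f a).PosSemidef) : (∑ a ∈ s, f a).PosSemidef :=
  Finset.sum_induction f _ (fun _ _ ha hb => ha.add hb) Matrix.PosSemidef.zero h

lemma cqMap_apply {n : ℕ} (B : Fin n → Mat ι) (X : Mat (Fin n)) :
    cqMap B X = ∑ i, X i i • B i := rfl

lemma tensorId_cqMap_apply {n : ℕ} (B : Fin n → Mat ι) (l : ℕ)
    (X : Matrix (Fin n × Fin l) (Fin n × Fin l) ℂ) (p q : ι × Fin l) :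
    tensorId (cqMap B) (Fin l) X p q = ∑ i, X (i, p.2) (i, q.2) * B i p.1 q.1 := by
  show cqMap B (Matrix.of fun a b => X (a, p.2) (b, q.2)) p.1 q.1 = _
  rw [cqMap_apply]
  rw [Matrix.sum_apply]
  exact Finset.sum_congr rfl fun i _ => by simp [Matrix.smul_apply]

lemma cqMap_isCP {n : ℕ} {B : Fin n → Mat ι} (hB : ∀ i, (B i).PosSemidef) :
    IsCP (cqMap B) := by
  intro l X hX
  obtain ⟨D, hD⟩ := Matrix.posSemidef_iff_eq_transpose_mul_self.mp hX
  choose C hC using fun i => Matrix.posSemidef_iff_eq_transpose_mul_self.mp (hB i)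
  have key : tensorId (cqMap B) (Fin l) X
      = ∑ i : Fin n,
        (Matrix.of fun (u : (Fin n × Fin l) × ι) (p : ι × Fin l) =>
          D u.1 (i, p.2) * C i u.2 p.1)ᴴ *
        (Matrix.of fun (u : (Fin n × Fin l) × ι) (p : ι × Fin l) =>
          D u.1 (i, p.2) * C i u.2 p.1) := by
    funext p q
    rw [tensorId_cqMap_apply, Matrix.sum_apply]
    refine Finset.sum_congr rfl fun i _ => ?_
    rw [hD, hC i]
    simp only [Matrix.conjTranspose_apply, Matrix.of_apply, Matrix.mul_apply]
    conv_rhs => rw [Fintype.sum_prod_type]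
    rw [Finset.sum_mul_sum]
    refine Finset.sum_congr rfl fun w _ => ?_
    refine Finset.sum_congr rfl fun a _ => ?_
    simp only [star_mul']
    ring
  rw [key]
  exact psd_sum _ _ fun i _ => Matrix.posSemidef_conjTranspose_mul_self _

lemma isCP_cqMap_psd {n : ℕ} {B : Fin n → Mat ι} (h : IsCP (cqMap B)) (i : Fin n) :
    (B i).PosSemidef := by
  set w : Fin n × Fin 1 → ℂ := fun p => if p.1 = i then 1 else 0 with hw
  set Y : Matrix (Fin n × Fin 1) (Fin n × Fin 1) ℂ :=
    Matrix.of fun u p => if u.1 = i then w p else 0 with hY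
  have hXpsd : (Yᴴ * Y).PosSemidef := Matrix.posSemidef_conjTranspose_mul_self Y
  have hM := h 1 (Yᴴ * Y) hXpsd
  have hent : ∀ p q : ι × Fin 1, tensorId (cqMap B) (Fin 1) (Yᴴ * Y) p q = B i p.1 q.1 := by
    intro p q
    rw [tensorId_cqMap_apply]
    have hterm : ∀ u a b : Fin n × Fin 1, star (Y u a) * Y u b
        = if u.1 = i then (if a.1 = i then (1:ℂ) else 0) * (if b.1 = i then 1 else 0) else 0 := by
      intro u a b
      by_cases hu : u.1 = i
      · by_cases ha : a.1 = i <;> by_cases hb : b.1 = i <;> simp [hY, hw, hu, ha, hb]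
      · simp [hY, hu]
    have hYent : ∀ a b : Fin n × Fin 1, (Yᴴ * Y) a b
        = (if a.1 = i then 1 else 0) * (if b.1 = i then 1 else 0) := by
      intro a b
      rw [Matrix.mul_apply]
      simp only [Matrix.conjTranspose_apply]
      have hs : ∑ u, star (Y u a) * Y u b = ∑ u : Fin n × Fin 1,
          if u.1 = i then (if a.1 = i then (1:ℂ) else 0) * (if b.1 = i then 1 else 0) else 0 :=
        Finset.sum_congr rfl fun u _ => hterm u a b
      rw [hs, Fintype.sum_prod_type]
      simp [Finset.sum_ite_eq']
    simp only [hYent]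
    simp [Finset.sum_ite_eq', ite_mul, mul_ite, mul_comm]
  -- now transfer PSD
  refine Matrix.PosSemidef.of_dotProduct_mulVec_nonneg ?_ ?_
  · have hherm := hM.1
    funext a b
    have h1 : (B i)ᴴ a b = star (tensorId (cqMap B) (Fin 1) (Yᴴ * Y) (b, 0) (a, 0)) := by
      rw [hent]; rfl
    rw [h1, ← Matrix.conjTranspose_apply, hherm, hent]
  · intro x
    have := hM.dotProduct_mulVec_nonneg (fun p => x p.1)
    convert this using 1
    simp only [dotProduct, Matrix.mulVec, dotProduct]
    rw [Fintype.sum_prod_type]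
    refine Finset.sum_congr rfl fun a _ => ?_
    rw [Fin.sum_univ_one]
    congr 1
    rw [Fintype.sum_prod_type]
    refine Finset.sum_congr rfl fun b _ => ?_
    rw [Fin.sum_univ_one, hent]

lemma comb_sub {n : ℕ} (σ : Mat ι) (A : Fin n → Mat ι) (c : ℂ) :
    c • erasure (ι := Fin n) σ - cqMap A = cqMap (fun i => c • σ - A i) := by
  apply LinearMap.ext
  intro X
  show c • (X.trace • σ) - cqMap A X = _
  rw [cqMap_apply, cqMap_apply]
  simp only [smul_sub, Finset.sum_sub_distrib]
  congr 1
  rw [Matrix.trace]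
  simp only [Matrix.diag, Finset.sum_smul, smul_smul]
  rw [Finset.smul_sum]
  exact Finset.sum_congr rfl fun i _ => by rw [smul_smul, mul_comm]

lemma comb_add {n : ℕ} (σ : Mat ι) (A : Fin n → Mat ι) (c : ℂ) :
    c • erasure (ι := Fin n) σ + cqMap A = cqMap (fun i => c • σ + A i) := by
  apply LinearMap.ext
  intro X
  show c • (X.trace • σ) + cqMap A X = _
  rw [cqMap_apply, cqMap_apply]
  simp only [smul_add, Finset.sum_add_distrib]
  congr 1
  rw [Matrix.trace]
  simp only [Matrix.diag, Finset.sum_smul, smul_smul]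
  rw [Finset.smul_sum]
  exact Finset.sum_congr rfl fun i _ => by rw [smul_smul, mul_comm]

lemma smul_psd {c : ℝ} (hc : 0 ≤ c) {M : Matrix ι ι ℂ} (hM : M.PosSemidef) :
    ((c : ℂ) • M).PosSemidef := by
  refine Matrix.PosSemidef.of_dotProduct_mulVec_nonneg ?_ ?_
  · rw [Matrix.IsHermitian, Matrix.conjTranspose_smul, hM.1.eq, Complex.star_def,
      Complex.conj_ofReal]
  · intro x
    rw [Matrix.smul_mulVec, dotProduct_smul, smul_eq_mul]
    exact mul_nonneg (Complex.zero_le_real.mpr hc) (hM.dotProduct_mulVec_nonneg x)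

lemma smul_one_posDef {c : ℝ} (hc : 0 < c) : ((c : ℂ) • (1 : Matrix ι ι ℂ)).PosDef := by
  rw [Matrix.smul_one_eq_diagonal]
  exact Matrix.PosDef.diagonal fun i => Complex.zero_lt_real.mpr hc



variable {ι : Type} [Fintype ι] [DecidableEq ι]

lemma staru_mul_u {M : Matrix ι ι ℂ} (hM : M.IsHermitian) :
    star (hM.eigenvectorUnitary : Matrix ι ι ℂ) * (hM.eigenvectorUnitary : Matrix ι ι ℂ) = 1 :=
  Matrix.mem_unitaryGroup_iff'.mp (hM.eigenvectorUnitary).2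

lemma u_mul_staru {M : Matrix ι ι ℂ} (hM : M.IsHermitian) :
    (hM.eigenvectorUnitary : Matrix ι ι ℂ) * star (hM.eigenvectorUnitary : Matrix ι ι ℂ) = 1 :=
  Matrix.mem_unitaryGroup_iff.mp (hM.eigenvectorUnitary).2

lemma conj_smul_one_sub {M : Matrix ι ι ℂ} (hM : M.IsHermitian) (r : ℝ) :
    star (hM.eigenvectorUnitary : Matrix ι ι ℂ) * ((r : ℂ) • (1 : Matrix ι ι ℂ) - M)
        * (hM.eigenvectorUnitary : Matrix ι ι ℂ)
      = Matrix.diagonal (fun i => ((r - hM.eigenvalues i : ℝ) : ℂ)) := by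
  rw [Matrix.mul_sub, Matrix.sub_mul, Matrix.mul_smul, Matrix.smul_mul, mul_one,
    staru_mul_u hM, hM.star_mul_self_mul_eq_diagonal, Matrix.smul_one_eq_diagonal,
    Matrix.diagonal_sub]
  funext i
  simp [Function.comp]

lemma conj_smul_one_add {M : Matrix ι ι ℂ} (hM : M.IsHermitian) (r : ℝ) :
    star (hM.eigenvectorUnitary : Matrix ι ι ℂ) * ((r : ℂ) • (1 : Matrix ι ι ℂ) + M)
        * (hM.eigenvectorUnitary : Matrix ι ι ℂ)
      = Matrix.diagonal (fun i => ((r + hM.eigenvalues i : ℝ) : ℂ)) := by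
  rw [Matrix.mul_add, Matrix.add_mul, Matrix.mul_smul, Matrix.smul_mul, mul_one,
    staru_mul_u hM, hM.star_mul_self_mul_eq_diagonal, Matrix.smul_one_eq_diagonal,
    Matrix.diagonal_add]
  funext i
  simp [Function.comp]

lemma conj_back {M : Matrix ι ι ℂ} (hM : M.IsHermitian) (X : Matrix ι ι ℂ) :
    (hM.eigenvectorUnitary : Matrix ι ι ℂ)
      * (star (hM.eigenvectorUnitary : Matrix ι ι ℂ) * X * (hM.eigenvectorUnitary : Matrix ι ι ℂ))
      * star (hM.eigenvectorUnitary : Matrix ι ι ℂ) = X := by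
  have h1 := u_mul_staru hM
  calc (hM.eigenvectorUnitary : Matrix ι ι ℂ) * (star (hM.eigenvectorUnitary : Matrix ι ι ℂ) * X
          * (hM.eigenvectorUnitary : Matrix ι ι ℂ)) * star (hM.eigenvectorUnitary : Matrix ι ι ℂ)
      = ((hM.eigenvectorUnitary : Matrix ι ι ℂ) * star (hM.eigenvectorUnitary : Matrix ι ι ℂ)) * X
          * ((hM.eigenvectorUnitary : Matrix ι ι ℂ) * star (hM.eigenvectorUnitary : Matrix ι ι ℂ))
        := by noncomm_ring
    _ = X := by rw [h1, one_mul, mul_one]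

/-- conjugation by the unitary preserves PSD, both ways -/
lemma psd_iff_conj_psd {M : Matrix ι ι ℂ} (hM : M.IsHermitian) (X : Matrix ι ι ℂ) :
    X.PosSemidef ↔ (star (hM.eigenvectorUnitary : Matrix ι ι ℂ) * X
      * (hM.eigenvectorUnitary : Matrix ι ι ℂ)).PosSemidef := by
  constructor
  · intro h
    have := h.conjTranspose_mul_mul_same (hM.eigenvectorUnitary : Matrix ι ι ℂ)
    rwa [← Matrix.star_eq_conjTranspose] at this
  · intro h
    have := h.mul_mul_conjTranspose_same (hM.eigenvectorUnitary : Matrix ι ι ℂ)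
    rwa [← Matrix.star_eq_conjTranspose, conj_back hM] at this

lemma psd_smul_one_sub_iff {M : Matrix ι ι ℂ} (hM : M.IsHermitian) (r : ℝ) :
    ((r : ℂ) • (1 : Matrix ι ι ℂ) - M).PosSemidef ↔ ∀ i, hM.eigenvalues i ≤ r := by
  rw [psd_iff_conj_psd hM, conj_smul_one_sub hM, Matrix.posSemidef_diagonal_iff]
  constructor
  · intro h i
    have := h i
    rw [Complex.zero_le_real] at this
    linarith
  · intro h i
    rw [Complex.zero_le_real]
    linarith [h i]

lemma psd_smul_one_add_iff {M : Matrix ι ι ℂ} (hM : M.IsHermitian) (r : ℝ) :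
    ((r : ℂ) • (1 : Matrix ι ι ℂ) + M).PosSemidef ↔ ∀ i, -r ≤ hM.eigenvalues i := by
  rw [psd_iff_conj_psd hM, conj_smul_one_add hM, Matrix.posSemidef_diagonal_iff]
  constructor
  · intro h i
    have := h i
    rw [Complex.zero_le_real] at this
    linarith
  · intro h i
    rw [Complex.zero_le_real]
    linarith [h i]



lemma abs_eigenvalue_le_norm {M : Matrix ι ι ℂ} (hM : M.IsHermitian) (i : ι) :
    |hM.eigenvalues i| ≤ ‖M‖ := by
  have h := M.l2_opNorm_mulVec (hM.eigenvectorBasis i)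
  have hb : ‖hM.eigenvectorBasis i‖ = 1 := hM.eigenvectorBasis.orthonormal.1 i
  rw [hb, mul_one] at h
  have hmv : (EuclideanSpace.equiv ι ℂ).symm (M *ᵥ (hM.eigenvectorBasis i))
      = (hM.eigenvalues i) • (hM.eigenvectorBasis i) := by
    rw [hM.mulVec_eigenvectorBasis i]; rfl
  rw [hmv, norm_smul, Real.norm_eq_abs, hb, mul_one] at h
  exact h


lemma norm_le_of_abs_eigenvalue_le {M : Matrix ι ι ℂ} (hM : M.IsHermitian) {r : ℝ}
    (hr : 0 ≤ r) (h : ∀ i, |hM.eigenvalues i| ≤ r) : ‖M‖ ≤ r := by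
  have hsq : (((r ^ 2 : ℝ) : ℂ) • (1 : Matrix ι ι ℂ) - M * M).PosSemidef := by
    rw [psd_iff_conj_psd hM]
    have hMM : star (hM.eigenvectorUnitary : Matrix ι ι ℂ) * (M * M)
        * (hM.eigenvectorUnitary : Matrix ι ι ℂ)
        = (star (hM.eigenvectorUnitary : Matrix ι ι ℂ) * M * (hM.eigenvectorUnitary : Matrix ι ι ℂ))
          * (star (hM.eigenvectorUnitary : Matrix ι ι ℂ) * M
            * (hM.eigenvectorUnitary : Matrix ι ι ℂ)) := by
      have h1 := u_mul_staru hM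
      calc star (hM.eigenvectorUnitary : Matrix ι ι ℂ) * (M * M)
            * (hM.eigenvectorUnitary : Matrix ι ι ℂ)
          = star (hM.eigenvectorUnitary : Matrix ι ι ℂ) * M
            * ((hM.eigenvectorUnitary : Matrix ι ι ℂ) * star (hM.eigenvectorUnitary : Matrix ι ι ℂ))
            * M * (hM.eigenvectorUnitary : Matrix ι ι ℂ) := by rw [h1]; noncomm_ring
        _ = _ := by noncomm_ring
    rw [Matrix.mul_sub, Matrix.sub_mul, Matrix.mul_smul, Matrix.smul_mul, mul_one,
      staru_mul_u hM, hMM, hM.star_mul_self_mul_eq_diagonal,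
      Matrix.diagonal_mul_diagonal, Matrix.smul_one_eq_diagonal,
      Matrix.diagonal_sub, Matrix.posSemidef_diagonal_iff]
    intro i
    rw [show ((r^2:ℝ):ℂ) - ((RCLike.ofReal ∘ hM.eigenvalues) i * (RCLike.ofReal ∘ hM.eigenvalues) i)
        = (((r^2 - hM.eigenvalues i ^ 2 : ℝ)) : ℂ) by simp [Function.comp]; push_cast; ring]
    rw [Complex.zero_le_real]
    nlinarith [h i, abs_nonneg (hM.eigenvalues i), le_abs_self (hM.eigenvalues i),
      neg_abs_le (hM.eigenvalues i)]
  rw [Matrix.l2_opNorm_def]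
  refine ContinuousLinearMap.opNorm_le_bound _ hr fun x => ?_
  set v : ι → ℂ := (WithLp.equiv 2 (ι → ℂ)) x with hv
  have hTx : ((Matrix.toEuclideanLin.trans LinearMap.toContinuousLinearMap) M) x
      = (WithLp.equiv 2 (ι → ℂ)).symm (M *ᵥ v) := rfl
  have hnormsq : ∀ w : ι → ℂ,
      ‖(WithLp.equiv 2 (ι → ℂ)).symm w‖ ^ 2 = Complex.re (dotProduct (star w) w) := by
    intro w
    have h1 : RCLike.re (inner (𝕜 := ℂ) ((WithLp.equiv 2 (ι → ℂ)).symm w)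
        ((WithLp.equiv 2 (ι → ℂ)).symm w)) = ‖(WithLp.equiv 2 (ι → ℂ)).symm w‖ ^ 2 :=
      inner_self_eq_norm_sq _
    rw [show inner ℂ ((WithLp.equiv 2 (ι → ℂ)).symm w) ((WithLp.equiv 2 (ι → ℂ)).symm w)
      = dotProduct (star w) w from by rw [dotProduct_comm]; rfl, RCLike.re_to_complex] at h1
    exact h1.symm
  have hkey : Complex.re (dotProduct (star (M *ᵥ v)) (M *ᵥ v))
      ≤ r ^ 2 * Complex.re (dotProduct (star v) v) := by
    have h0 := hsq.dotProduct_mulVec_nonneg v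
    have hrw : dotProduct (star v) ((((r ^ 2 : ℝ) : ℂ) • (1 : Matrix ι ι ℂ) - M * M) *ᵥ v)
        = ((r ^ 2 : ℝ) : ℂ) * dotProduct (star v) v
          - dotProduct (star (M *ᵥ v)) (M *ᵥ v) := by
      rw [Matrix.sub_mulVec, dotProduct_sub, Matrix.smul_mulVec,
        Matrix.one_mulVec, dotProduct_smul, smul_eq_mul, Matrix.star_mulVec, hM.eq,
        ← Matrix.dotProduct_mulVec, Matrix.mulVec_mulVec]
    rw [hrw] at h0
    have h0re := (Complex.le_def.mp h0).1
    simp only [Complex.zero_re, Complex.sub_re, Complex.mul_re, Complex.ofReal_re,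
      Complex.ofReal_im, zero_mul, sub_zero] at h0re
    linarith
  rw [hTx]
  have h1 := hnormsq (M *ᵥ v)
  have h2 := hnormsq v
  have hxnorm : ‖x‖ ^ 2 = Complex.re (dotProduct (star v) v) := by
    rw [← h2]; rfl
  have hMx0 : (0:ℝ) ≤ ‖(WithLp.equiv 2 (ι → ℂ)).symm (M *ᵥ v)‖ := norm_nonneg _
  have hx0 : (0:ℝ) ≤ ‖x‖ := norm_nonneg _
  have e : (r * ‖x‖) ^ 2 = r ^ 2 * (dotProduct (star v) v).re := by
    rw [mul_pow, hxnorm]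
  have hfin : ‖(WithLp.equiv 2 (ι → ℂ)).symm (M *ᵥ v)‖ ^ 2 ≤ (r * ‖x‖) ^ 2 := by
    rw [h1, e]; exact hkey
  calc ‖(WithLp.equiv 2 (ι → ℂ)).symm (M *ᵥ v)‖
      = Real.sqrt (‖(WithLp.equiv 2 (ι → ℂ)).symm (M *ᵥ v)‖ ^ 2) := (Real.sqrt_sq hMx0).symm
    _ ≤ Real.sqrt ((r * ‖x‖) ^ 2) := Real.sqrt_le_sqrt hfin
    _ = r * ‖x‖ := Real.sqrt_sq (mul_nonneg hr hx0)

lemma norm_le_iff_psd_pair {M : Matrix ι ι ℂ} (hM : M.IsHermitian) {r : ℝ} (hr : 0 ≤ r) :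
    ‖M‖ ≤ r ↔ ((r : ℂ) • (1 : Matrix ι ι ℂ) - M).PosSemidef
      ∧ ((r : ℂ) • (1 : Matrix ι ι ℂ) + M).PosSemidef := by
  rw [psd_smul_one_sub_iff hM, psd_smul_one_add_iff hM]
  constructor
  · intro h
    constructor
    · exact fun i => (abs_le.mp ((abs_eigenvalue_le_norm hM i).trans h)).2
    · exact fun i => (abs_le.mp ((abs_eigenvalue_le_norm hM i).trans h)).1
  · rintro ⟨h1, h2⟩
    exact norm_le_of_abs_eigenvalue_le hM hr fun i => abs_le.mpr ⟨h2 i, h1 i⟩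

section sqrtFacts

variable {σ : Matrix ι ι ℂ} (hσ : σ.PosDef)

lemma sqrt_isUnit_det : IsUnit (hσ.posSemidef.sqrt).det := by
  have h1 : hσ.posSemidef.sqrt * hσ.posSemidef.sqrt = σ := hσ.posSemidef.sqrt_mul_self
  have h2 : (hσ.posSemidef.sqrt).det * (hσ.posSemidef.sqrt).det = σ.det := by
    rw [← Matrix.det_mul, h1]
  have h3 : σ.det ≠ 0 := ne_of_gt hσ.det_pos
  rw [isUnit_iff_ne_zero]
  intro h0
  rw [h0, mul_zero] at h2
  exact h3 h2.symm

lemma sqrt_inv_hermitian : ((hσ.posSemidef.sqrt)⁻¹).IsHermitian := by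
  rw [Matrix.IsHermitian, Matrix.conjTranspose_nonsing_inv, hσ.posSemidef.posSemidef_sqrt.1.eq]

lemma sqrt_mul_inv : hσ.posSemidef.sqrt * (hσ.posSemidef.sqrt)⁻¹ = 1 :=
  Matrix.mul_nonsing_inv _ (sqrt_isUnit_det hσ)

lemma inv_mul_sqrt : (hσ.posSemidef.sqrt)⁻¹ * hσ.posSemidef.sqrt = 1 :=
  Matrix.nonsing_inv_mul _ (sqrt_isUnit_det hσ)

lemma conjN_hermitian {A : Matrix ι ι ℂ} (hA : A.IsHermitian) :
    ((hσ.posSemidef.sqrt)⁻¹ * A * (hσ.posSemidef.sqrt)⁻¹).IsHermitian := by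
  rw [Matrix.IsHermitian, Matrix.conjTranspose_mul, Matrix.conjTranspose_mul,
    (sqrt_inv_hermitian hσ).eq, hA.eq]
  noncomm_ring

set_option maxHeartbeats 1000000 in
lemma psd_pair_iff_norm {A : Matrix ι ι ℂ} (hA : A.IsHermitian) {r : ℝ} (hr : 0 ≤ r) :
    (((r : ℂ) • σ - A).PosSemidef ∧ ((r : ℂ) • σ + A).PosSemidef)
      ↔ ‖(hσ.posSemidef.sqrt)⁻¹ * A * (hσ.posSemidef.sqrt)⁻¹‖ ≤ r := by
  set s := hσ.posSemidef.sqrt with hs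
  set si := s⁻¹ with hsi
  have hsm : s * s = σ := hσ.posSemidef.sqrt_mul_self
  have hssi : s * si = 1 := sqrt_mul_inv hσ
  have hsis : si * s = 1 := inv_mul_sqrt hσ
  have hsih : siᴴ = si := sqrt_inv_hermitian hσ
  have hsh : sᴴ = s := hσ.posSemidef.posSemidef_sqrt.1.eq
  set N := si * A * si with hN
  have id1s : si * ((r : ℂ) • σ - A) * si = (r : ℂ) • (1 : Matrix ι ι ℂ) - N := by
    rw [Matrix.mul_sub, Matrix.sub_mul, Matrix.mul_smul, Matrix.smul_mul, ← hsm, hN]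
    congr 2
    calc si * (s * s) * si = (si * s) * (s * si) := by noncomm_ring
      _ = 1 := by rw [hsis, hssi, one_mul]
  have id1a : si * ((r : ℂ) • σ + A) * si = (r : ℂ) • (1 : Matrix ι ι ℂ) + N := by
    rw [Matrix.mul_add, Matrix.add_mul, Matrix.mul_smul, Matrix.smul_mul, ← hsm, hN]
    congr 2
    calc si * (s * s) * si = (si * s) * (s * si) := by noncomm_ring
      _ = 1 := by rw [hsis, hssi, one_mul]
  have id2s : s * ((r : ℂ) • (1 : Matrix ι ι ℂ) - N) * s = (r : ℂ) • σ - A := by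
    rw [Matrix.mul_sub, Matrix.sub_mul, Matrix.mul_smul, Matrix.smul_mul, mul_one, hsm, hN]
    refine congrArg (fun X => (r : ℂ) • σ - X) ?_
    calc s * (si * A * si) * s = (s * si) * A * (si * s) := by noncomm_ring
      _ = A := by rw [hssi, hsis, one_mul, mul_one]
  have id2a : s * ((r : ℂ) • (1 : Matrix ι ι ℂ) + N) * s = (r : ℂ) • σ + A := by
    rw [Matrix.mul_add, Matrix.add_mul, Matrix.mul_smul, Matrix.smul_mul, mul_one, hsm, hN]
    refine congrArg (fun X => (r : ℂ) • σ + X) ?_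
    calc s * (si * A * si) * s = (s * si) * A * (si * s) := by noncomm_ring
      _ = A := by rw [hssi, hsis, one_mul, mul_one]
  rw [norm_le_iff_psd_pair (conjN_hermitian hσ hA) hr]
  constructor
  · rintro ⟨h1, h2⟩
    constructor
    · have := h1.mul_mul_conjTranspose_same si
      rw [hsih, id1s] at this
      exact this
    · have := h2.mul_mul_conjTranspose_same si
      rw [hsih, id1a] at this
      exact this
  · rintro ⟨h12, h22⟩
    have h1 : ((r : ℂ) • (1 : Matrix ι ι ℂ) - N).PosSemidef := h12
    have h2 : ((r : ℂ) • (1 : Matrix ι ι ℂ) + N).PosSemidef := h22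
    constructor
    · have := h1.mul_mul_conjTranspose_same s
      rwa [hsh, id2s] at this
    · have := h2.mul_mul_conjTranspose_same s
      rwa [hsh, id2a] at this

end sqrtFacts

end DDN

theorem dualDiamondNorm_cqMap {n k : ℕ} [NeZero n] (A : Fin n → Mat (Fin k))
    (hA : ∀ i, (A i).IsHermitian) :
    dualDiamondNorm (cqMap A) =
      sInf {r : ℝ | ∃ σ : Mat (Fin k), ∃ hσ : σ.PosDef, σ.trace = 1 ∧
        r = Finset.univ.sup' Finset.univ_nonempty
          (fun i => ‖(hσ.posSemidef.sqrt)⁻¹ * A i * (hσ.posSemidef.sqrt)⁻¹‖)} := by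
  classical
  rw [dualDiamondNorm]
  set S : Set ℝ := {r : ℝ | 0 < r ∧ ∃ σ : Mat (Fin k), IsState σ ∧
    IsCP ((r : ℂ) • erasure (ι := Fin n) σ - cqMap A) ∧
    IsCP ((r : ℂ) • erasure (ι := Fin n) σ + cqMap A)} with hSdef
  set T : Set ℝ := {r : ℝ | ∃ σ : Mat (Fin k), ∃ hσ : σ.PosDef, σ.trace = 1 ∧
    r = Finset.univ.sup' Finset.univ_nonempty
      (fun i => ‖(hσ.posSemidef.sqrt)⁻¹ * A i * (hσ.posSemidef.sqrt)⁻¹‖)} with hTdef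
  rcases Nat.eq_zero_or_pos k with hk | hk
  · -- degenerate case : no states exist
    have htr0 : ∀ σ : Mat (Fin k), σ.trace = 0 := by
      intro σ
      subst hk
      simp [Matrix.trace]
    have hSe : S = ∅ := by
      ext r
      simp only [hSdef, Set.mem_setOf_eq, Set.mem_empty_iff_false, iff_false]
      rintro ⟨-, σ, ⟨-, htr⟩, -, -⟩
      rw [htr0 σ] at htr
      exact one_ne_zero htr.symm
    have hTe : T = ∅ := by
      ext r
      simp only [hTdef, Set.mem_setOf_eq, Set.mem_empty_iff_false, iff_false]
      rintro ⟨σ, hσ, htr, -⟩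
      rw [htr0 σ] at htr
      exact one_ne_zero htr.symm
    rw [hSe, hTe]
  · have : Nonempty (Fin k) := ⟨⟨0, hk⟩⟩
    have hkR : (k : ℝ) ≠ 0 := Nat.cast_ne_zero.mpr (Nat.pos_iff_ne_zero.mp hk)
    have hkC : (k : ℂ) ≠ 0 := Nat.cast_ne_zero.mpr (Nat.pos_iff_ne_zero.mp hk)
    -- part (a)
    have ha : ∀ m ∈ T, ∀ ε : ℝ, 0 < ε → m + ε ∈ S := by
      rintro m ⟨σ, hσ, htr, rfl⟩ ε hε
      set f : Fin n → ℝ :=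
        fun i => ‖(hσ.posSemidef.sqrt)⁻¹ * A i * (hσ.posSemidef.sqrt)⁻¹‖ with hf
      have hm0 : 0 ≤ Finset.univ.sup' Finset.univ_nonempty f :=
        le_trans (norm_nonneg _)
          (Finset.le_sup' f (Finset.mem_univ (Classical.arbitrary (Fin n))))
      have hr0 : (0:ℝ) < Finset.univ.sup' Finset.univ_nonempty f + ε := by linarith
      have hbound : ∀ i, f i ≤ Finset.univ.sup' Finset.univ_nonempty f + ε := fun i =>
        le_trans (Finset.le_sup' f (Finset.mem_univ i)) (by linarith)
      refine ⟨hr0, σ, ⟨hσ.posSemidef, htr⟩, ?_, ?_⟩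
      · rw [DDN.comb_sub]
        exact DDN.cqMap_isCP fun i =>
          ((DDN.psd_pair_iff_norm hσ (hA i) hr0.le).mpr (hbound i)).1
      · rw [DDN.comb_add]
        exact DDN.cqMap_isCP fun i =>
          ((DDN.psd_pair_iff_norm hσ (hA i) hr0.le).mpr (hbound i)).2
    -- part (b)
    have hb : ∀ r ∈ S, ∀ δ : ℝ, 0 < δ → ∃ m ∈ T, m ≤ r + δ := by
      rintro r ⟨hr0, σ, ⟨hσpsd, hσtr⟩, hcp1, hcp2⟩ δ hδ
      rw [DDN.comb_sub] at hcp1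
      rw [DDN.comb_add] at hcp2
      have hpsd1 : ∀ i, ((r : ℂ) • σ - A i).PosSemidef := fun i => DDN.isCP_cqMap_psd hcp1 i
      have hpsd2 : ∀ i, ((r : ℂ) • σ + A i).PosSemidef := fun i => DDN.isCP_cqMap_psd hcp2 i
      have hrδ : (0:ℝ) < r + δ := by linarith
      set ε : ℝ := δ / (r + δ) with hε
      have hε0 : 0 < ε := div_pos hδ hrδ
      have hε1 : ε < 1 := (div_lt_one hrδ).mpr (by linarith)
      set σ' : Mat (Fin k) :=
        ((1 - ε : ℝ) : ℂ) • σ + ((ε / k : ℝ) : ℂ) • (1 : Mat (Fin k)) with hσ'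
      have hσ'pos : σ'.PosDef :=
        Matrix.PosDef.posSemidef_add (DDN.smul_psd (by linarith) hσpsd)
          (DDN.smul_one_posDef (by positivity))
      have hσ'tr : σ'.trace = 1 := by
        rw [hσ', Matrix.trace_add, Matrix.trace_smul, Matrix.trace_smul, hσtr,
          Matrix.trace_one]
        simp only [smul_eq_mul, mul_one, Finset.card_univ, Fintype.card_fin]
        push_cast
        field_simp
        ring
      have c1 : ((r + δ : ℝ) : ℂ) * ((1 - ε : ℝ) : ℂ) = (r : ℂ) := by
        have h1 : (r + δ) * (1 - ε) = r := by
          rw [hε]; field_simp; ring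
        calc ((r + δ : ℝ) : ℂ) * ((1 - ε : ℝ) : ℂ) = (((r + δ) * (1 - ε) : ℝ) : ℂ) := by
              push_cast; ring
          _ = (r : ℂ) := by rw [h1]
      have c2 : ((r + δ : ℝ) : ℂ) * ((ε / k : ℝ) : ℂ) = ((δ / k : ℝ) : ℂ) := by
        have h1 : (r + δ) * (ε / k) = δ / k := by
          rw [hε]; field_simp
        calc ((r + δ : ℝ) : ℂ) * ((ε / k : ℝ) : ℂ) = (((r + δ) * (ε / k) : ℝ) : ℂ) := by
              push_cast; ring
          _ = _ := by rw [h1]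
      have hkey : ∀ i, (((r + δ : ℝ) : ℂ) • σ' - A i).PosSemidef
          ∧ (((r + δ : ℝ) : ℂ) • σ' + A i).PosSemidef := by
        intro i
        have e1 : ((r + δ : ℝ) : ℂ) • σ' - A i
            = ((r : ℂ) • σ - A i) + ((δ / k : ℝ) : ℂ) • (1 : Mat (Fin k)) := by
          rw [hσ', smul_add, smul_smul, smul_smul, c1, c2]
          abel
        have e2 : ((r + δ : ℝ) : ℂ) • σ' + A i
            = ((r : ℂ) • σ + A i) + ((δ / k : ℝ) : ℂ) • (1 : Mat (Fin k)) := by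
          rw [hσ', smul_add, smul_smul, smul_smul, c1, c2]
          abel
        constructor
        · rw [e1]
          exact (hpsd1 i).add (DDN.smul_psd (by positivity) Matrix.PosSemidef.one)
        · rw [e2]
          exact (hpsd2 i).add (DDN.smul_psd (by positivity) Matrix.PosSemidef.one)
      refine ⟨Finset.univ.sup' Finset.univ_nonempty
        (fun i => ‖(hσ'pos.posSemidef.sqrt)⁻¹ * A i * (hσ'pos.posSemidef.sqrt)⁻¹‖),
        ⟨σ', hσ'pos, hσ'tr, rfl⟩, ?_⟩
      rw [Finset.sup'_le_iff]
      intro i _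
      exact (DDN.psd_pair_iff_norm hσ'pos (hA i) hrδ.le).mp (hkey i)
    -- nonemptiness and bounds
    have hTne : T.Nonempty := by
      have hσ0 : (((1 / k : ℝ) : ℂ) • (1 : Mat (Fin k))).PosDef :=
        DDN.smul_one_posDef (by positivity)
      have htr0 : (((1 / k : ℝ) : ℂ) • (1 : Mat (Fin k))).trace = 1 := by
        rw [Matrix.trace_smul, Matrix.trace_one]
        simp only [smul_eq_mul, Finset.card_univ, Fintype.card_fin]
        push_cast
        field_simp
      exact ⟨_, ⟨_, hσ0, htr0, rfl⟩⟩
    have hSne : S.Nonempty := by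
      obtain ⟨m, hm⟩ := hTne
      exact ⟨m + 1, ha m hm 1 one_pos⟩
    have hbddS : BddBelow S := ⟨0, fun r hr => hr.1.le⟩
    have hbddT : BddBelow T := by
      refine ⟨0, ?_⟩
      rintro m ⟨σ, hσ, htr, rfl⟩
      exact le_trans (norm_nonneg _)
        (Finset.le_sup'
          (fun i => ‖(hσ.posSemidef.sqrt)⁻¹ * A i * (hσ.posSemidef.sqrt)⁻¹‖)
          (Finset.mem_univ (Classical.arbitrary (Fin n))))
    apply le_antisymm
    · refine le_csInf hTne fun m hm => ?_
      refine le_of_forall_pos_le_add fun ε hε => ?_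
      exact csInf_le hbddS (ha m hm ε hε)
    · refine le_csInf hSne fun r hr => ?_
      refine le_of_forall_pos_le_add fun δ hδ => ?_
      obtain ⟨m, hmT, hm⟩ := hb r hr δ hδ
      exact le_trans (csInf_le hbddT hmT) hm

end
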